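/- For a connected graph G of order n ≥ 3, the second smallest distance Laplacian eigenvalue satisfies ρ^L_{n−1}(G) ≤ (n/(n−1))·Tr_min, where Tr_min is the minimum vertex transmission of G. -/

import Mathlib

open Finset Matrix BigOperators

variable {V : Type*} [Fintype V] [DecidableEq V]

/-- The transmission of a vertex: the sum of distances to all other vertices. -/
noncomputable def transmission (G : SimpleGraph V) (v : V) : ℕ := ∑ u, G.dist v u

/-- The distance matrix of a graph. -/
noncomputable def distMatrix (G : SimpleGraph V) : Matrix V V ℝ :=
  fun u v => (G.dist u v : ℝ)

/-- The distance Laplacian matrix `Tr(G) - D(G)`. -/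
noncomputable def distLap (G : SimpleGraph V) : Matrix V V ℝ :=
  Matrix.diagonal (fun v => (transmission G v : ℝ)) - distMatrix G

/-- The Wiener index of a graph. -/
noncomputable def wiener (G : SimpleGraph V) : ℝ := (∑ v, (transmission G v : ℝ)) / 2

/-- `ρ` lists the eigenvalues of the (Hermitian) matrix `M` in nonincreasing order. -/
def IsSpectrum {n : ℕ} (M : Matrix (Fin n) (Fin n) ℝ) (ρ : Fin n → ℝ) : Prop :=
  Antitone ρ ∧ ∃ (hM : M.IsHermitian) (e : Fin n ≃ Fin n), ∀ i, ρ i = hM.eigenvalues (e i)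

/-- Distance Laplacian energy, given the eigenvalue list `ρ`. -/
noncomputable def DLEnergy {n : ℕ} (G : SimpleGraph (Fin n)) (ρ : Fin n → ℝ) : ℝ :=
  ∑ i, |ρ i - 2 * wiener G / n|

/-- The graph has diameter two. -/
def diamTwo (G : SimpleGraph V) : Prop :=
  (∀ u v, G.dist u v ≤ 2) ∧ ∃ u v, G.dist u v = 2

/-- The multiset of eigenvalues of a Hermitian matrix. -/
noncomputable def eigMultiset (M : Matrix V V ℝ) (hM : M.IsHermitian) : Multiset ℝ :=
  Finset.univ.val.map hM.eigenvalues


lemma distLap_isHermitian (G : SimpleGraph V) : (distLap G).IsHermitian := by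
  unfold Matrix.IsHermitian
  ext u v
  simp only [distLap, distMatrix, conjTranspose_apply, Matrix.sub_apply, diagonal_apply,
    star_sub, star_trivial]
  rw [SimpleGraph.dist_comm]
  congr 1
  by_cases h : u = v
  · simp [h]
  · simp [h, Ne.symm h]

lemma distLap_mulVec (G : SimpleGraph V) (x : V → ℝ) (u : V) :
    (distLap G *ᵥ x) u = (transmission G u : ℝ) * x u - ∑ w, (G.dist u w : ℝ) * x w := by
  simp [distLap, distMatrix, mulVec, dotProduct, sub_mul, Finset.sum_sub_distrib,
    diagonal, Finset.sum_ite_eq, transmission]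

lemma distLap_mulVec_one (G : SimpleGraph V) :
    distLap G *ᵥ (fun _ => (1:ℝ)) = 0 := by
  funext u
  simp [distLap_mulVec, transmission]

lemma quadform_eq (G : SimpleGraph V) (x : V → ℝ) :
    x ⬝ᵥ (distLap G *ᵥ x) = ∑ u, ∑ w, (G.dist u w : ℝ) * ((x u)^2 - x u * x w) := by
  simp only [dotProduct, distLap_mulVec, mul_sub, Finset.mul_sum, Finset.sum_sub_distrib]
  congr 1
  · rw [← Finset.sum_congr rfl]
    intro u _
    rw [transmission]
    push_cast
    rw [Finset.sum_mul, Finset.mul_sum]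
    apply Finset.sum_congr rfl
    intro w _
    ring
  · congr 1; funext u; congr 1; funext w; ring

lemma two_quadform_eq (G : SimpleGraph V) (x : V → ℝ) :
    2 * (x ⬝ᵥ (distLap G *ᵥ x)) = ∑ u, ∑ w, (G.dist u w : ℝ) * (x u - x w)^2 := by
  have h1 := quadform_eq G x
  have h2 : x ⬝ᵥ (distLap G *ᵥ x) = ∑ u, ∑ w, (G.dist u w : ℝ) * ((x w)^2 - x w * x u) := by
    rw [h1, Finset.sum_comm]
    apply Finset.sum_congr rfl; intro u _
    apply Finset.sum_congr rfl; intro w _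
    rw [SimpleGraph.dist_comm]
  rw [two_mul]
  nth_rewrite 1 [h1]
  rw [h2, ← Finset.sum_add_distrib]
  apply Finset.sum_congr rfl; intro u _
  rw [← Finset.sum_add_distrib]
  apply Finset.sum_congr rfl; intro w _
  ring

lemma quadform_nonneg (G : SimpleGraph V) (x : V → ℝ) :
    0 ≤ x ⬝ᵥ (distLap G *ᵥ x) := by
  have h := two_quadform_eq G x
  have hpos : (0:ℝ) ≤ ∑ u, ∑ w, (G.dist u w : ℝ) * (x u - x w)^2 :=
    Finset.sum_nonneg fun u _ => Finset.sum_nonneg fun w _ =>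
      mul_nonneg (Nat.cast_nonneg _) (sq_nonneg (x u - x w))
  linarith

lemma distLap_ker_const (G : SimpleGraph V) (hconn : G.Connected) (y : V → ℝ)
    (hy : distLap G *ᵥ y = 0) : ∀ u w, y u = y w := by
  have hq : 2 * (y ⬝ᵥ (distLap G *ᵥ y)) = 0 := by rw [hy]; simp
  rw [two_quadform_eq] at hq
  have hterm : ∀ u ∈ (univ : Finset V), ∀ w ∈ (univ : Finset V),
      (G.dist u w : ℝ) * (y u - y w)^2 = 0 := by
    have houter := (Finset.sum_eq_zero_iff_of_nonneg (fun u _ =>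
      Finset.sum_nonneg (fun w _ =>
        mul_nonneg (Nat.cast_nonneg _) (sq_nonneg (y u - y w))))).mp hq
    intro u hu w hw
    exact (Finset.sum_eq_zero_iff_of_nonneg (fun w _ =>
      mul_nonneg (Nat.cast_nonneg _) (sq_nonneg (y u - y w)))).mp (houter u hu) w hw
  intro u w
  by_cases h : u = w
  · rw [h]
  · have hd : (0:ℝ) < (G.dist u w : ℝ) := by
      exact_mod_cast hconn.pos_dist_of_ne h
    have := hterm u (Finset.mem_univ u) w (Finset.mem_univ w)
    have h2 : (y u - y w)^2 = 0 := by
      rcases mul_eq_zero.mp this with h' | h'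
      · linarith
      · exact h'
    have := sq_eq_zero_iff.mp h2
    linarith

lemma secondSmallest_le {n : ℕ} (hn : 2 ≤ n) (M : Matrix (Fin n) (Fin n) ℝ)
    (hM : M.IsHermitian)
    (hQF : ∀ y : Fin n → ℝ, 0 ≤ y ⬝ᵥ (M *ᵥ y))
    (hker : ∀ y : Fin n → ℝ, M *ᵥ y = 0 → ∀ u w, y u = y w)
    (hone : M *ᵥ (fun _ => (1:ℝ)) = 0)
    (ρ : Fin n → ℝ) (hanti : Antitone ρ) (e : Fin n ≃ Fin n)
    (hρ : ∀ i, ρ i = hM.eigenvalues (e i))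
    (x : Fin n → ℝ) (hxsum : ∑ i, x i = 0) :
    ρ ⟨n-2, by omega⟩ * (x ⬝ᵥ x) ≤ x ⬝ᵥ (M *ᵥ x) := by
  classical
  set U : Matrix (Fin n) (Fin n) ℝ := (hM.eigenvectorUnitary : Matrix (Fin n) (Fin n) ℝ) with hU
  set μ : Fin n → ℝ := hM.eigenvalues with hμ
  set y : Fin n → ℝ := Uᵀ *ᵥ x with hy
  -- star U = Uᵀ over ℝ
  have hstar : star U = Uᵀ := by
    rw [Matrix.star_eq_conjTranspose]
    ext i j
    simp [Matrix.conjTranspose_apply]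
  -- (1) quadratic form in eigencoordinates
  have hdiag : M = U * Matrix.diagonal μ * Uᵀ := by
    have := hM.spectral_theorem
    rw [Unitary.conjStarAlgAut_apply, hstar] at this
    convert this using 2 <;> rfl
  have key1 : x ⬝ᵥ (M *ᵥ x) = ∑ j, μ j * (y j)^2 := by
    rw [hdiag]
    rw [Matrix.mul_assoc, ← Matrix.mulVec_mulVec, ← Matrix.mulVec_mulVec]
    rw [Matrix.dotProduct_mulVec x U, ← Matrix.mulVec_transpose, ← hy]
    simp only [dotProduct, Matrix.mulVec_diagonal]
    exact Finset.sum_congr rfl fun j _ => by ring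
  -- (2) norm preserved
  have key2 : x ⬝ᵥ x = ∑ j, (y j)^2 := by
    have hUU : U * Uᵀ = 1 := by
      rw [← hstar]; exact Matrix.mem_unitaryGroup_iff.mp hM.eigenvectorUnitary.2
    have : y ⬝ᵥ y = x ⬝ᵥ ((U * Uᵀ) *ᵥ x) := by
      rw [hy, ← Matrix.mulVec_mulVec, Matrix.dotProduct_mulVec, ← Matrix.mulVec_transpose,
        Matrix.transpose_transpose, dotProduct_comm]
    rw [hUU, Matrix.one_mulVec] at this
    rw [← this, dotProduct]
    exact Finset.sum_congr rfl fun j _ => by ring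
  -- eigenvalues are nonnegative
  have hμnonneg : ∀ j, 0 ≤ μ j := by
    intro j
    have h := hM.eigenvalues_eq j
    simp only [star_trivial, RCLike.re_to_real] at h
    rw [hμ, h]
    exact hQF _
  -- 0 is an eigenvalue
  have hdet : M.det = 0 := by
    rw [← Matrix.exists_mulVec_eq_zero_iff]
    refine ⟨fun _ => 1, ?_, hone⟩
    intro h
    have := congrFun h ⟨0, by omega⟩
    norm_num at this
  have hzero : ∃ j, μ j = 0 := by
    have h := hM.det_eq_prod_eigenvalues
    rw [hdet] at h
    obtain ⟨j, _, hj⟩ := Finset.prod_eq_zero_iff.mp h.symm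
    exact ⟨j, by exact_mod_cast hj⟩
  set lastIdx : Fin n := ⟨n-1, by omega⟩ with hlast
  have hρlast : ρ lastIdx = 0 := by
    obtain ⟨j, hj⟩ := hzero
    have h1 : ρ lastIdx ≤ ρ (e.symm j) := by
      apply hanti
      have h := (e.symm j).isLt
      have h2 : (e.symm j).val ≤ n - 1 := by omega
      exact Fin.le_def.mpr h2
    have h2 : ρ (e.symm j) = 0 := by rw [hρ]; simp [hj]
    have h3 : 0 ≤ ρ lastIdx := by rw [hρ]; exact hμnonneg _
    linarith
  have hμlast : μ (e lastIdx) = 0 := by rw [← hρ]; exact hρlast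
  -- the eigenvector for the zero eigenvalue is constant
  have hBeig : M *ᵥ ⇑(hM.eigenvectorBasis (e lastIdx)) = 0 := by
    have h := hM.mulVec_eigenvectorBasis (e lastIdx)
    rw [← hμ, hμlast, zero_smul] at h
    exact h
  have hconst := hker _ hBeig
  have hylast : y (e lastIdx) = 0 := by
    have h0 : y (e lastIdx) = ∑ u, hM.eigenvectorBasis (e lastIdx) u * x u := by
      simp [hy, Matrix.mulVec, dotProduct, Matrix.transpose_apply, hU]
    rw [h0]
    have hc : ∀ u : Fin n, hM.eigenvectorBasis (e lastIdx) u
        = hM.eigenvectorBasis (e lastIdx) ⟨0, by omega⟩ :=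
      fun u => hconst u _
    rw [Finset.sum_congr rfl (fun u _ => by rw [hc u]), ← Finset.mul_sum, hxsum, mul_zero]
  -- conclude
  rw [key1, key2]
  have hre1 : ∑ j, μ j * (y j)^2 = ∑ i, ρ i * (y (e i))^2 := by
    rw [← Equiv.sum_comp e (fun j => μ j * (y j)^2)]
    exact Finset.sum_congr rfl fun i _ => by rw [hρ]
  have hre2 : ∑ j, (y j)^2 = ∑ i, (y (e i))^2 :=
    (Equiv.sum_comp e (fun j => (y j)^2)).symm
  rw [hre1, hre2, Finset.mul_sum]
  apply Finset.sum_le_sum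
  intro i _
  by_cases hi : i = lastIdx
  · rw [hi, hylast]
    simp
  · have hle : i ≤ (⟨n-2, by omega⟩ : Fin n) := by
      have h1 : i.val ≠ n - 1 := fun h => hi (Fin.ext h)
      have h2 := i.isLt
      have h3 : i.val ≤ n - 2 := by omega
      exact Fin.le_def.mpr h3
    exact mul_le_mul_of_nonneg_right (hanti hle) (sq_nonneg _)

theorem stmt7 {n : ℕ} (hn : 3 ≤ n) (G : SimpleGraph (Fin n)) (hconn : G.Connected)
    (ρ : Fin n → ℝ) (hρ : IsSpectrum (distLap G) ρ)
    (Trmin : ℕ)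
    (hTr : Trmin = Finset.univ.inf' ⟨⟨0, by omega⟩, Finset.mem_univ _⟩ (transmission G)) :
    ρ ⟨n - 2, by omega⟩ ≤ (n : ℝ) / ((n : ℝ) - 1) * (Trmin : ℝ) := by
  obtain ⟨hanti, hM, e, hρe⟩ := hρ
  obtain ⟨v₀, -, hv₀⟩ := Finset.exists_mem_eq_inf'
    (⟨⟨0, by omega⟩, Finset.mem_univ _⟩ : (Finset.univ : Finset (Fin n)).Nonempty)
    (transmission G)
  set T : ℝ := (transmission G v₀ : ℝ) with hT
  set x : Fin n → ℝ := fun u => (n:ℝ) * (if u = v₀ then 1 else 0) - 1 with hx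
  have hind : ∑ u, (if u = v₀ then (1:ℝ) else 0) = 1 := by simp
  have hxsum : ∑ u, x u = 0 := by
    simp [hx, Finset.sum_sub_distrib, ← Finset.mul_sum, hind]
  have hxx : x ⬝ᵥ x = (n:ℝ) * ((n:ℝ) - 1) := by
    have h1 : ∀ u, x u * x u = (n:ℝ)^2 * (if u = v₀ then 1 else 0)
        - 2*(n:ℝ)*(if u = v₀ then 1 else 0) + 1 := by
      intro u; by_cases h : u = v₀ <;> simp [hx, h] <;> ring
    rw [dotProduct, Finset.sum_congr rfl fun u _ => h1 u]
    rw [Finset.sum_add_distrib, Finset.sum_sub_distrib, ← Finset.mul_sum, ← Finset.mul_sum, hind]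
    simp [Finset.card_univ]
    ring
  have hTr' : ∀ u, (transmission G u : ℝ) = ∑ w, (G.dist u w : ℝ) := by
    intro u; rw [transmission]; push_cast; rfl
  have hTsym : ∑ u, (G.dist u v₀ : ℝ) = T := by
    rw [hT, hTr' v₀]
    apply Finset.sum_congr rfl
    intro u _
    rw [SimpleGraph.dist_comm]
  have hQFx : x ⬝ᵥ (distLap G *ᵥ x) = (n:ℝ)^2 * T := by
    have hmv : ∀ u, (distLap G *ᵥ x) u
        = (n:ℝ) * ((transmission G u : ℝ) * (if u = v₀ then 1 else 0) - (G.dist u v₀ : ℝ)) := by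
      intro u
      rw [distLap_mulVec]
      have hsum : ∑ w, (G.dist u w : ℝ) * x w
          = (n:ℝ) * (G.dist u v₀ : ℝ) - (transmission G u : ℝ) := by
        simp only [hx]
        have h2 : ∀ w ∈ (univ : Finset (Fin n)),
            (G.dist u w : ℝ) * ((n:ℝ)*(if w = v₀ then 1 else 0) - 1)
            = (n:ℝ) * ((if w = v₀ then (G.dist u w : ℝ) else 0)) - (G.dist u w : ℝ) := by
          intro w _; by_cases h : w = v₀ <;> simp [h] <;> ring
        rw [Finset.sum_congr rfl h2, Finset.sum_sub_distrib, ← Finset.mul_sum]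
        rw [Finset.sum_ite_eq' univ v₀ (fun w => (G.dist u w : ℝ))]
        simp [hTr' u]
      rw [hsum]
      by_cases h : u = v₀ <;> simp [hx, h] <;> try ring
    rw [dotProduct, Finset.sum_congr rfl fun u _ => by rw [hmv u]]
    have h3 : ∀ u ∈ (univ : Finset (Fin n)),
        x u * ((n:ℝ) * ((transmission G u : ℝ) * (if u = v₀ then 1 else 0) - (G.dist u v₀ : ℝ)))
        = (n:ℝ) * (((n:ℝ) - 1) * T * (if u = v₀ then 1 else 0))
          - (n:ℝ) * (x u * (G.dist u v₀ : ℝ)) := by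
      intro u _
      by_cases h : u = v₀
      · simp [hx, h, hT]; try ring
      · simp [hx, h]; try ring
    rw [Finset.sum_congr rfl h3, Finset.sum_sub_distrib, ← Finset.mul_sum, ← Finset.mul_sum,
      ← Finset.mul_sum, hind]
    have hxd : ∑ u, x u * (G.dist u v₀ : ℝ) = -T := by
      simp only [hx]
      have h4 : ∀ u ∈ (univ : Finset (Fin n)),
          ((n:ℝ)*(if u = v₀ then 1 else 0) - 1) * (G.dist u v₀ : ℝ)
          = (n:ℝ) * (if u = v₀ then (G.dist u v₀ : ℝ) else 0) - (G.dist u v₀ : ℝ) := by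
        intro u _; by_cases h : u = v₀ <;> simp [h] <;> ring
      rw [Finset.sum_congr rfl h4, Finset.sum_sub_distrib, ← Finset.mul_sum,
        Finset.sum_ite_eq' univ v₀ (fun u => (G.dist u v₀ : ℝ)), hTsym]
      simp [SimpleGraph.dist_self]
    rw [hxd]
    ring
  have hkey := secondSmallest_le (by omega) (distLap G) hM (quadform_nonneg G)
    (distLap_ker_const G hconn) (distLap_mulVec_one G) ρ hanti e hρe x hxsum
  rw [hxx, hQFx] at hkey
  have hTmin : (Trmin : ℝ) = T := by rw [hTr, hv₀]
  rw [hTmin]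
  have hn1 : (0:ℝ) < (n:ℝ) - 1 := by
    have : (3:ℝ) ≤ (n:ℝ) := by exact_mod_cast hn
    linarith
  have hn0 : (0:ℝ) < (n:ℝ) := by linarith
  rw [div_mul_eq_mul_div, le_div_iff₀ hn1]
  nlinarith [hkey]
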